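/- Let I be an instance of SPA-ST. For any two super-stable matchings M1 and M2 in I and every lecturer l_k, the number of students assigned to l_k in M1 equals the number of students assigned to l_k in M2. -/

import Mathlib

set_option linter.unusedSectionVars false


open scoped Classical

/-- An instance of the Student-Project Allocation problem with lecturer
preferences over students, with Ties (SPA-ST).  `sPref s p q` means student `s`
ranks project `p` at least as highly as project `q` (`p ⪰_s q`); `lPref k t t'`
means lecturer `k` ranks student `t` at least as highly as student `t'`. -/
structure SPAST (S P L : Type) [Fintype S] [Fintype P] [Fintype L]
    [DecidableEq S] [DecidableEq P] [DecidableEq L] where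
  /-- the lecturer offering each project -/
  lec : P → L
  /-- project capacities -/
  c : P → ℕ
  /-- lecturer capacities -/
  d : L → ℕ
  cpos : ∀ p : P, 0 < c p
  dpos : ∀ k : L, 0 < d k
  /-- the set of projects acceptable to each student -/
  acc : S → Finset P
  sPref : S → P → P → Prop
  lPref : L → S → S → Prop
  sRefl : ∀ s : S, ∀ p ∈ acc s, sPref s p p
  sTrans : ∀ s : S, ∀ p ∈ acc s, ∀ q ∈ acc s, ∀ r ∈ acc s,
    sPref s p q → sPref s q r → sPref s p r
  sTotal : ∀ s : S, ∀ p ∈ acc s, ∀ q ∈ acc s, sPref s p q ∨ sPref s q p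
  lRefl : ∀ k : L, ∀ t : S, (∃ p ∈ acc t, lec p = k) → lPref k t t
  lTrans : ∀ k : L, ∀ t1 t2 t3 : S,
    (∃ p ∈ acc t1, lec p = k) → (∃ p ∈ acc t2, lec p = k) → (∃ p ∈ acc t3, lec p = k) →
    lPref k t1 t2 → lPref k t2 t3 → lPref k t1 t3
  lTotal : ∀ k : L, ∀ t1 t2 : S,
    (∃ p ∈ acc t1, lec p = k) → (∃ p ∈ acc t2, lec p = k) →
    lPref k t1 t2 ∨ lPref k t2 t1
  capLB : ∀ p : P, c p ≤ d (lec p)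
  capUB : ∀ k : L, d k ≤ ∑ p ∈ Finset.univ.filter (fun p => lec p = k), c p

namespace SPAST

variable {S P L : Type} [Fintype S] [Fintype P] [Fintype L]
  [DecidableEq S] [DecidableEq P] [DecidableEq L]

/-- `M` is a matching: pairs are acceptable, each student is matched at most once,
and project and lecturer capacities are respected. -/
def IsMatching (I : SPAST S P L) (M : Finset (S × P)) : Prop :=
  (∀ x ∈ M, x.2 ∈ I.acc x.1) ∧
  (∀ s : S, ∀ p q : P, (s, p) ∈ M → (s, q) ∈ M → p = q) ∧
  (∀ p : P, (M.filter (fun x => x.2 = p)).card ≤ I.c p) ∧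
  (∀ k : L, (M.filter (fun x => I.lec x.2 = k)).card ≤ I.d k)

/-- The set `M(p)` of students assigned to project `p` in `M`. -/
def projAsg (M : Finset (S × P)) (p : P) : Finset S :=
  (M.filter (fun x => x.2 = p)).image Prod.fst

/-- The set `M(l_k)` of students assigned to lecturer `k` in `M`. -/
def lecAsg (I : SPAST S P L) (M : Finset (S × P)) (k : L) : Finset S :=
  (M.filter (fun x => I.lec x.2 = k)).image Prod.fst

/-- `t` is a least-preferred (worst) student of lecturer `k` in the set `T`. -/
def WorstIn (I : SPAST S P L) (k : L) (T : Finset S) (t : S) : Prop :=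
  t ∈ T ∧ ∀ t' ∈ T, I.lPref k t' t

/-- `(s, p)` is a super-blocking pair for `M`. -/
def SuperBlocking (I : SPAST S P L) (M : Finset (S × P)) (s : S) (p : P) : Prop :=
  p ∈ I.acc s ∧ (s, p) ∉ M ∧
  (∀ q : P, (s, q) ∈ M → ¬(I.sPref s q p ∧ ¬I.sPref s p q)) ∧
  (((projAsg M p).card < I.c p ∧ (lecAsg I M (I.lec p)).card < I.d (I.lec p)) ∨
   ((projAsg M p).card < I.c p ∧ (lecAsg I M (I.lec p)).card = I.d (I.lec p) ∧
     (s ∈ lecAsg I M (I.lec p) ∨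
      ∃ t : S, WorstIn I (I.lec p) (lecAsg I M (I.lec p)) t ∧ I.lPref (I.lec p) s t)) ∨
   ((projAsg M p).card = I.c p ∧
     ∃ t : S, WorstIn I (I.lec p) (projAsg M p) t ∧ I.lPref (I.lec p) s t))

/-- `(s, p)` is a weakly-blocking pair for `M`. -/
def WeakBlocking (I : SPAST S P L) (M : Finset (S × P)) (s : S) (p : P) : Prop :=
  p ∈ I.acc s ∧ (s, p) ∉ M ∧
  (∀ q : P, (s, q) ∈ M → I.sPref s p q ∧ ¬I.sPref s q p) ∧
  (((projAsg M p).card < I.c p ∧ (lecAsg I M (I.lec p)).card < I.d (I.lec p)) ∨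
   ((projAsg M p).card < I.c p ∧ (lecAsg I M (I.lec p)).card = I.d (I.lec p) ∧
     (s ∈ lecAsg I M (I.lec p) ∨
      ∃ t : S, WorstIn I (I.lec p) (lecAsg I M (I.lec p)) t ∧
        (I.lPref (I.lec p) s t ∧ ¬I.lPref (I.lec p) t s))) ∨
   ((projAsg M p).card = I.c p ∧
     ∃ t : S, WorstIn I (I.lec p) (projAsg M p) t ∧
       (I.lPref (I.lec p) s t ∧ ¬I.lPref (I.lec p) t s)))

/-- `M` is a super-stable matching in `I`. -/
def SuperStable (I : SPAST S P L) (M : Finset (S × P)) : Prop :=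
  I.IsMatching M ∧ ∀ (s : S) (p : P), ¬SuperBlocking I M s p

/-- `M` is a weakly stable matching in `I`. -/
def WeaklyStable (I : SPAST S P L) (M : Finset (S × P)) : Prop :=
  I.IsMatching M ∧ ∀ (s : S) (p : P), ¬WeakBlocking I M s p

/-- `I` is an SPA-S instance: all preference lists are strictly ordered
(the preorders are antisymmetric). -/
def StrictPrefs (I : SPAST S P L) : Prop :=
  (∀ s : S, ∀ p ∈ I.acc s, ∀ q ∈ I.acc s, I.sPref s p q → I.sPref s q p → p = q) ∧
  (∀ k : L, ∀ t t' : S, (∃ p ∈ I.acc t, I.lec p = k) → (∃ p ∈ I.acc t', I.lec p = k) →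
    I.lPref k t t' → I.lPref k t' t → t = t')

/-- `I'` is an SPA-S instance obtained from `I` by breaking the ties. -/
def TieBreaking (I I' : SPAST S P L) : Prop :=
  I'.lec = I.lec ∧ I'.c = I.c ∧ I'.d = I.d ∧ I'.acc = I.acc ∧
  StrictPrefs I' ∧
  (∀ (s : S) (p q : P), I.sPref s p q → ¬I.sPref s q p →
    I'.sPref s p q ∧ ¬I'.sPref s q p) ∧
  (∀ (k : L) (t t' : S), I.lPref k t t' → ¬I.lPref k t' t →
    I'.lPref k t t' ∧ ¬I'.lPref k t' t)

end SPAST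

section Aux

open SPAST

variable {S P L : Type} [Fintype S] [Fintype P] [Fintype L]
  [DecidableEq S] [DecidableEq P] [DecidableEq L]

private lemma mem_projAsg {N : Finset (S × P)} {t : S} {p : P} :
    t ∈ projAsg N p ↔ (t, p) ∈ N := by
  constructor
  · intro h
    obtain ⟨x, hx, hxt⟩ := Finset.mem_image.mp h
    obtain ⟨hxN, hx2⟩ := Finset.mem_filter.mp hx
    rcases x with ⟨a, b⟩
    dsimp at hxt hx2
    subst hxt; subst hx2
    exact hxN
  · intro h
    exact Finset.mem_image.mpr ⟨(t, p), Finset.mem_filter.mpr ⟨h, rfl⟩, rfl⟩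

private lemma mem_lecAsg {I : SPAST S P L} {N : Finset (S × P)} {t : S} {k : L} :
    t ∈ lecAsg I N k ↔ ∃ q, (t, q) ∈ N ∧ I.lec q = k := by
  constructor
  · intro h
    obtain ⟨x, hx, hxt⟩ := Finset.mem_image.mp h
    obtain ⟨hxN, hx2⟩ := Finset.mem_filter.mp hx
    rcases x with ⟨a, b⟩
    dsimp at hxt hx2 ⊢
    subst hxt
    exact ⟨b, hxN, hx2⟩
  · rintro ⟨q, hq, hk⟩
    exact Finset.mem_image.mpr ⟨(t, q), Finset.mem_filter.mpr ⟨hq, hk⟩, rfl⟩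

private lemma card_projAsg (N : Finset (S × P)) (p : P) :
    (projAsg N p).card = (N.filter (fun x => x.2 = p)).card := by
  apply Finset.card_image_of_injOn
  intro x hx y hy hxy
  have hx2 := (Finset.mem_filter.mp hx).2
  have hy2 := (Finset.mem_filter.mp hy).2
  exact Prod.ext hxy (hx2.trans hy2.symm)

private lemma card_lecAsg {I : SPAST S P L} {N : Finset (S × P)}
    (hu : ∀ s : S, ∀ p q : P, (s, p) ∈ N → (s, q) ∈ N → p = q) (k : L) :
    (lecAsg I N k).card = (N.filter (fun x => I.lec x.2 = k)).card := by
  apply Finset.card_image_of_injOn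
  intro x hx y hy hxy
  have hxN := (Finset.mem_filter.mp hx).1
  have hyN := (Finset.mem_filter.mp hy).1
  rcases x with ⟨a, b⟩
  rcases y with ⟨a', b'⟩
  dsimp at hxy
  subst hxy
  have : b = b' := hu a b b' hxN hyN
  rw [this]

private lemma exists_worst (I : SPAST S P L) (k : L) (T : Finset S)
    (hne : T.Nonempty) (hacc : ∀ t ∈ T, ∃ p ∈ I.acc t, I.lec p = k) :
    ∃ w ∈ T, ∀ t ∈ T, I.lPref k t w := by
  classical
  revert hne hacc
  induction T using Finset.induction_on with
  | empty => intro hne _; exact absurd hne (by simp)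
  | @insert a T' hnotmem ih =>
    intro _ hacc
    rcases T'.eq_empty_or_nonempty with rfl | hT'
    · refine ⟨a, Finset.mem_insert_self a _, ?_⟩
      intro t ht
      rcases Finset.mem_insert.mp ht with rfl | h
      · exact I.lRefl k t (hacc t (Finset.mem_insert_self t _))
      · simp at h
    · obtain ⟨w, hwT, hw⟩ := ih hT' (fun t ht => hacc t (Finset.mem_insert_of_mem ht))
      have haccA := hacc a (Finset.mem_insert_self a T')
      have haccW := hacc w (Finset.mem_insert_of_mem hwT)
      rcases I.lTotal k a w haccA haccW with haw | hwa
      · refine ⟨w, Finset.mem_insert_of_mem hwT, ?_⟩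
        intro t ht
        rcases Finset.mem_insert.mp ht with rfl | h
        · exact haw
        · exact hw t h
      · refine ⟨a, Finset.mem_insert_self a T', ?_⟩
        intro t ht
        rcases Finset.mem_insert.mp ht with rfl | h
        · exact I.lRefl k t haccA
        · exact I.lTrans k t w a (hacc t ht) haccW haccA (hw t h) hwa

private lemma claim1 {I : SPAST S P L} {N : Finset (S × P)} (hN : SuperStable I N)
    {s : S} {p : P} (hacc : p ∈ I.acc s) (hpn : (s, p) ∉ N)
    (hh : ∀ q, (s, q) ∈ N → ¬(I.sPref s q p ∧ ¬I.sPref s p q)) :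
    ((projAsg N p).card = I.c p ∧
      ∀ t ∈ projAsg N p, I.lPref (I.lec p) t s ∧ ¬I.lPref (I.lec p) s t) ∨
    ((projAsg N p).card < I.c p ∧ (lecAsg I N (I.lec p)).card = I.d (I.lec p) ∧
      s ∉ lecAsg I N (I.lec p) ∧
      ∀ t ∈ lecAsg I N (I.lec p), I.lPref (I.lec p) t s ∧ ¬I.lPref (I.lec p) s t) := by
  classical
  have hnb : ¬ SuperBlocking I N s p := hN.2 s p
  have hb : ¬ ( ((projAsg N p).card < I.c p ∧
        (lecAsg I N (I.lec p)).card < I.d (I.lec p)) ∨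
      ((projAsg N p).card < I.c p ∧ (lecAsg I N (I.lec p)).card = I.d (I.lec p) ∧
        (s ∈ lecAsg I N (I.lec p) ∨
          ∃ t : S, WorstIn I (I.lec p) (lecAsg I N (I.lec p)) t ∧ I.lPref (I.lec p) s t)) ∨
      ((projAsg N p).card = I.c p ∧
        ∃ t : S, WorstIn I (I.lec p) (projAsg N p) t ∧ I.lPref (I.lec p) s t) ) :=
    fun h => hnb ⟨hacc, hpn, hh, h⟩
  have haccs : ∃ r ∈ I.acc s, I.lec r = I.lec p := ⟨p, hacc, rfl⟩
  by_cases hf : (projAsg N p).card = I.c p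
  · left
    refine ⟨hf, ?_⟩
    have hne : (projAsg N p).Nonempty := Finset.card_pos.mp (by rw [hf]; exact I.cpos p)
    have haccT : ∀ t ∈ projAsg N p, ∃ r ∈ I.acc t, I.lec r = I.lec p := by
      intro t ht
      exact ⟨p, hN.1.1 (t, p) (mem_projAsg.mp ht), rfl⟩
    obtain ⟨w, hwm, hw⟩ := exists_worst I (I.lec p) (projAsg N p) hne haccT
    have hnsw : ¬ I.lPref (I.lec p) s w :=
      fun hsw => hb (Or.inr (Or.inr ⟨hf, w, ⟨hwm, hw⟩, hsw⟩))
    intro t ht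
    have hnst : ¬ I.lPref (I.lec p) s t :=
      fun hst => hnsw (I.lTrans (I.lec p) s t w haccs (haccT t ht) (haccT w hwm) hst (hw t ht))
    exact ⟨(I.lTotal (I.lec p) t s (haccT t ht) haccs).resolve_right hnst, hnst⟩
  · right
    have hple : (projAsg N p).card ≤ I.c p := by
      rw [card_projAsg]
      exact hN.1.2.2.1 p
    have hplt := lt_of_le_of_ne hple hf
    have hlle : (lecAsg I N (I.lec p)).card ≤ I.d (I.lec p) := by
      rw [card_lecAsg hN.1.2.1]
      exact hN.1.2.2.2 (I.lec p)
    have hlf : (lecAsg I N (I.lec p)).card = I.d (I.lec p) := by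
      by_contra h
      exact hb (Or.inl ⟨hplt, lt_of_le_of_ne hlle h⟩)
    have hnii : ¬ (s ∈ lecAsg I N (I.lec p) ∨
        ∃ t : S, WorstIn I (I.lec p) (lecAsg I N (I.lec p)) t ∧ I.lPref (I.lec p) s t) :=
      fun h => hb (Or.inr (Or.inl ⟨hplt, hlf, h⟩))
    push_neg at hnii
    obtain ⟨hsnot, hnw⟩ := hnii
    have hne : (lecAsg I N (I.lec p)).Nonempty :=
      Finset.card_pos.mp (by rw [hlf]; exact I.dpos _)
    have haccT : ∀ t ∈ lecAsg I N (I.lec p), ∃ r ∈ I.acc t, I.lec r = I.lec p := by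
      intro t ht
      obtain ⟨q, hq, hk⟩ := mem_lecAsg.mp ht
      exact ⟨q, hN.1.1 (t, q) hq, hk⟩
    obtain ⟨w, hwm, hw⟩ := exists_worst I (I.lec p) _ hne haccT
    have hnsw : ¬ I.lPref (I.lec p) s w := hnw w ⟨hwm, hw⟩
    refine ⟨hplt, hlf, hsnot, ?_⟩
    intro t ht
    have hnst : ¬ I.lPref (I.lec p) s t :=
      fun hst => hnsw (I.lTrans (I.lec p) s t w haccs (haccT t ht) (haccT w hwm) hst (hw t ht))
    exact ⟨(I.lTotal (I.lec p) t s (haccT t ht) haccs).resolve_right hnst, hnst⟩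

private lemma claimW {I : SPAST S P L} {N : Finset (S × P)} (hN : SuperStable I N)
    {s : S} {p : P} (hacc : p ∈ I.acc s) (hpn : (s, p) ∉ N)
    (hh : ∀ q, (s, q) ∈ N → ¬(I.sPref s q p ∧ ¬I.sPref s p q)) :
    ∀ t ∈ projAsg N p, I.lPref (I.lec p) t s ∧ ¬I.lPref (I.lec p) s t := by
  rcases claim1 hN hacc hpn hh with ⟨_, h⟩ | ⟨_, _, _, h⟩
  · exact h
  · intro t ht
    exact h t (mem_lecAsg.mpr ⟨p, mem_projAsg.mp ht, rfl⟩)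

private def Hng (I : SPAST S P L) (N : Finset (S × P)) (x : S × P) : Prop :=
  ∀ q, (x.1, q) ∈ N → ¬(I.sPref x.1 q x.2 ∧ ¬I.sPref x.1 x.2 q)

private lemma proj_excl {I : SPAST S P L} {M N : Finset (S × P)}
    (hM : SuperStable I M) (hN : SuperStable I N) {x y : S × P}
    (hxM : x ∈ M) (hxN : x ∉ N) (hx : Hng I N x)
    (hyN : y ∈ N) (hyM : y ∉ M) (hy : Hng I M y) (hpq : y.2 = x.2) : False := by
  have h1 := claimW hN (hM.1.1 x hxM) hxN hx y.1 (mem_projAsg.mpr (by rw [← hpq]; exact hyN))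
  have h2 := claimW hM (hN.1.1 y hyN) hyM hy x.1 (mem_projAsg.mpr (by rw [hpq]; exact hxM))
  rw [hpq] at h2
  exact h1.2 h2.1

private noncomputable def Eset (I : SPAST S P L) (M N : Finset (S × P)) (k : L) : Finset (S × P) :=
  M.filter fun x => I.lec x.2 = k ∧ x ∉ N ∧ Hng I N x

private noncomputable def Fset (I : SPAST S P L) (M N : Finset (S × P)) (k : L) : Finset (S × P) :=
  M.filter fun x => I.lec x.2 = k ∧ x ∉ N ∧ ¬ Hng I N x

private noncomputable def Cset (I : SPAST S P L) (M N : Finset (S × P)) (k : L) : Finset (S × P) :=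
  M.filter fun x => I.lec x.2 = k ∧ x ∈ N

private lemma ineq_of_all_full {I : SPAST S P L} {M N : Finset (S × P)}
    (hM : SuperStable I M) (hN : SuperStable I N) (k : L)
    (hall : ∀ x ∈ Eset I M N k, (projAsg N x.2).card = I.c x.2) :
    (Eset I M N k).card ≤ (Fset I N M k).card := by
  classical
  set R := (Eset I M N k).image Prod.snd with hR
  have hfib : (Eset I M N k).card
      = ∑ p ∈ R, ((Eset I M N k).filter fun x => x.2 = p).card :=
    Finset.card_eq_sum_card_fiberwise fun x hx => Finset.mem_image_of_mem _ hx
  have hstep : ∀ p ∈ R, ((Eset I M N k).filter fun x => x.2 = p).card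
      ≤ (N.filter fun y => y.2 = p ∧ y ∉ M).card := by
    intro p hp
    obtain ⟨x, hxE, hxp⟩ := Finset.mem_image.mp hp
    have hNp : (N.filter fun z => z.2 = p).card = I.c p := by
      rw [← card_projAsg, ← hxp]
      exact hall x hxE
    have hMp : (M.filter fun z => z.2 = p).card ≤ I.c p := hM.1.2.2.1 p
    have e1 : (M.filter fun z => z.2 = p).filter (fun z => z ∈ N)
        = (N.filter fun z => z.2 = p).filter (fun z => z ∈ M) := by
      ext z
      simp only [Finset.mem_filter]
      tauto
    have s1 := Finset.card_filter_add_card_filter_not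
      (s := M.filter fun z => z.2 = p) (p := fun z => z ∈ N)
    have s2 := Finset.card_filter_add_card_filter_not
      (s := N.filter fun z => z.2 = p) (p := fun z => z ∈ M)
    have hsub : (Eset I M N k).filter (fun x => x.2 = p)
        ⊆ (M.filter fun z => z.2 = p).filter (fun z => ¬ z ∈ N) := by
      intro z hz
      simp only [Eset, Finset.mem_filter] at hz ⊢
      tauto
    have h5 := Finset.card_le_card hsub
    have h6 : ((M.filter fun z => z.2 = p).filter (fun z => z ∈ N)).card
        = ((N.filter fun z => z.2 = p).filter (fun z => z ∈ M)).card := by rw [e1]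
    have hBcard : (N.filter fun y => y.2 = p ∧ y ∉ M).card
        = ((N.filter fun z => z.2 = p).filter fun z => ¬ z ∈ M).card := by
      rw [Finset.filter_filter]
    omega
  have hdisj : ∀ a ∈ R, ∀ b ∈ R, a ≠ b →
      Disjoint (N.filter fun y => y.2 = a ∧ y ∉ M) (N.filter fun y => y.2 = b ∧ y ∉ M) := by
    intro a _ b _ hab
    apply Finset.disjoint_left.mpr
    intro y hya hyb
    simp only [Finset.mem_filter] at hya hyb
    exact hab (by rw [← hya.2.1, hyb.2.1])
  have hbu : ∑ p ∈ R, (N.filter fun y => y.2 = p ∧ y ∉ M).card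
      = (R.biUnion fun p => N.filter fun y => y.2 = p ∧ y ∉ M).card :=
    (Finset.card_biUnion hdisj).symm
  have hsubF : (R.biUnion fun p => N.filter fun y => y.2 = p ∧ y ∉ M) ⊆ Fset I N M k := by
    intro y hy
    obtain ⟨p, hpR, hyp⟩ := Finset.mem_biUnion.mp hy
    obtain ⟨x, hxE, hxp⟩ := Finset.mem_image.mp hpR
    simp only [Finset.mem_filter] at hyp
    have hxE' := hxE
    simp only [Eset, Finset.mem_filter] at hxE'
    simp only [Fset, Finset.mem_filter]
    refine ⟨hyp.1, ?_, hyp.2.2, ?_⟩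
    · rw [hyp.2.1, ← hxp]
      exact hxE'.2.1
    · intro hHy
      exact proj_excl hM hN hxE'.1 hxE'.2.2.1 hxE'.2.2.2 hyp.1 hyp.2.2 hHy
        (by rw [hyp.2.1, ← hxp])
  calc (Eset I M N k).card
      = ∑ p ∈ R, ((Eset I M N k).filter fun x => x.2 = p).card := hfib
    _ ≤ ∑ p ∈ R, (N.filter fun y => y.2 = p ∧ y ∉ M).card := Finset.sum_le_sum hstep
    _ = (R.biUnion fun p => N.filter fun y => y.2 = p ∧ y ∉ M).card := hbu
    _ ≤ (Fset I N M k).card := Finset.card_le_card hsubF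

private lemma split3 {I : SPAST S P L} (M N : Finset (S × P)) (k : L) :
    (M.filter fun x => I.lec x.2 = k).card =
      (Cset I M N k).card + (Eset I M N k).card + (Fset I M N k).card := by
  classical
  have s1 := Finset.card_filter_add_card_filter_not
    (s := M.filter fun x => I.lec x.2 = k) (p := fun x => x ∈ N)
  have s2 := Finset.card_filter_add_card_filter_not
    (s := (M.filter fun x => I.lec x.2 = k).filter fun x => ¬ x ∈ N)
    (p := fun x => Hng I N x)
  have e1 : (M.filter fun x => I.lec x.2 = k).filter (fun x => x ∈ N) = Cset I M N k := by
    ext z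
    simp only [Cset, Finset.mem_filter]
    tauto
  have e2 : ((M.filter fun x => I.lec x.2 = k).filter fun x => ¬ x ∈ N).filter
      (fun x => Hng I N x) = Eset I M N k := by
    ext z
    simp only [Eset, Finset.mem_filter]
    tauto
  have e3 : ((M.filter fun x => I.lec x.2 = k).filter fun x => ¬ x ∈ N).filter
      (fun x => ¬ Hng I N x) = Fset I M N k := by
    ext z
    simp only [Fset, Finset.mem_filter]
    tauto
  rw [e1] at s1
  rw [e2, e3] at s2
  omega

private lemma main_ineq {I : SPAST S P L} {M N : Finset (S × P)}
    (hM : SuperStable I M) (hN : SuperStable I N) (k : L) :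
    (Eset I M N k).card ≤ (Fset I N M k).card := by
  classical
  by_cases hall : ∀ x ∈ Eset I M N k, (projAsg N x.2).card = I.c x.2
  · exact ineq_of_all_full hM hN k hall
  · push_neg at hall
    obtain ⟨x0, hx0E, hx0ne⟩ := hall
    have hx0 := hx0E
    simp only [Eset, Finset.mem_filter] at hx0
    obtain ⟨hx0M, hx0k, hx0N, hx0H⟩ := hx0
    rcases claim1 hN (hM.1.1 x0 hx0M) hx0N hx0H with ⟨hfull, _⟩ | ⟨_, hNf, _, hall0⟩
    · exact absurd hfull hx0ne
    rw [hx0k] at hNf hall0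
    have hE2full : ∀ y ∈ Eset I N M k, (projAsg M y.2).card = I.c y.2 := by
      intro y hyE
      have hy := hyE
      simp only [Eset, Finset.mem_filter] at hy
      obtain ⟨hyN, hyk, hyM, hyH⟩ := hy
      rcases claim1 hM (hN.1.1 y hyN) hyM hyH with ⟨hf, _⟩ | ⟨_, _, _, hally⟩
      · exact hf
      · exfalso
        rw [hyk] at hally
        have hy1 : y.1 ∈ lecAsg I N k := mem_lecAsg.mpr ⟨y.2, hyN, hyk⟩
        have hx1 : x0.1 ∈ lecAsg I M k := mem_lecAsg.mpr ⟨x0.2, hx0M, hx0k⟩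
        exact (hall0 y.1 hy1).2 (hally x0.1 hx1).1
    have hE2F1 : (Eset I N M k).card ≤ (Fset I M N k).card :=
      ineq_of_all_full hN hM k hE2full
    have hs1 := split3 (I := I) M N k
    have hs2 := split3 (I := I) N M k
    have hcc : (Cset I M N k).card = (Cset I N M k).card := by
      congr 1
      ext z
      simp only [Cset, Finset.mem_filter]
      tauto
    have hMle : (M.filter fun x => I.lec x.2 = k).card ≤ I.d k := hM.1.2.2.2 k
    have hNeq : (N.filter fun x => I.lec x.2 = k).card = I.d k := by
      rw [← card_lecAsg hN.1.2.1]
      exact hNf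
    omega

private lemma F_card_le_E_card {I : SPAST S P L} {M N : Finset (S × P)}
    (hM : SuperStable I M) (hN : SuperStable I N) :
    (N.filter fun y => y ∉ M ∧ ¬ Hng I M y).card
      ≤ (M.filter fun x => x ∉ N ∧ Hng I N x).card := by
  classical
  have huM := hM.1.2.1
  have huN := hN.1.2.1
  apply Finset.card_le_card_of_injOn
    (fun y => (y.1, if h : ∃ q, (y.1, q) ∈ M then h.choose else y.2))
  · intro y hy
    simp only [Finset.mem_coe, Finset.mem_filter] at hy
    obtain ⟨hyN, hyM, hyH⟩ := hy
    simp only [Hng, not_forall] at hyH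
    push_neg at hyH
    obtain ⟨q, hqM, hq1, hq2⟩ := hyH
    have hex : ∃ r, (y.1, r) ∈ M := ⟨q, hqM⟩
    have hceq : hex.choose = q := huM y.1 hex.choose q hex.choose_spec hqM
    beta_reduce
    rw [dif_pos hex, hceq]
    simp only [Finset.mem_coe, Finset.mem_filter]
    refine ⟨hqM, ?_, ?_⟩
    · intro hqN
      have hq : q = y.2 := huN y.1 q y.2 hqN hyN
      rw [hq] at hqM
      exact hyM hqM
    · intro r hr
      have hry : r = y.2 := huN y.1 r y.2 hr hyN
      rw [hry]
      rintro ⟨_, hno⟩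
      exact hno hq1
  · intro y hy z hz hyz
    simp only [Finset.mem_coe, Finset.mem_filter] at hy hz
    have h1 : y.1 = z.1 := (Prod.ext_iff.mp hyz).1
    have h2 : y.2 = z.2 := huN y.1 y.2 z.2 hy.1 (by rw [h1]; exact hz.1)
    exact Prod.ext h1 h2

private lemma sum_Eset {I : SPAST S P L} (M N : Finset (S × P)) :
    ∑ k : L, (Eset I M N k).card = (M.filter fun x => x ∉ N ∧ Hng I N x).card := by
  classical
  rw [Finset.card_eq_sum_card_fiberwise
    (f := fun x : S × P => I.lec x.2) (t := Finset.univ) (fun x _ => Finset.mem_univ _)]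
  apply Finset.sum_congr rfl
  intro k _
  congr 1
  ext z
  simp only [Eset, Finset.mem_filter]
  tauto

private lemma sum_Fset {I : SPAST S P L} (M N : Finset (S × P)) :
    ∑ k : L, (Fset I M N k).card = (M.filter fun x => x ∉ N ∧ ¬ Hng I N x).card := by
  classical
  rw [Finset.card_eq_sum_card_fiberwise
    (f := fun x : S × P => I.lec x.2) (t := Finset.univ) (fun x _ => Finset.mem_univ _)]
  apply Finset.sum_congr rfl
  intro k _
  congr 1
  ext z
  simp only [Fset, Finset.mem_filter]
  tauto

end Aux


open SPAST in
theorem super_stable_lecturer_counts_eq {S P L : Type} [Fintype S] [Fintype P] [Fintype L]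
    [DecidableEq S] [DecidableEq P] [DecidableEq L]
    (I : SPAST S P L) (M1 M2 : Finset (S × P))
    (h1 : SuperStable I M1) (h2 : SuperStable I M2) :
    ∀ k : L, (lecAsg I M1 k).card = (lecAsg I M2 k).card := by
  classical
  have key12 : ∀ k : L, (Eset I M1 M2 k).card ≤ (Fset I M2 M1 k).card :=
    fun k => main_ineq h1 h2 k
  have key21 : ∀ k : L, (Eset I M2 M1 k).card ≤ (Fset I M1 M2 k).card :=
    fun k => main_ineq h2 h1 k
  have hsE12 := sum_Eset (I := I) M1 M2
  have hsE21 := sum_Eset (I := I) M2 M1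
  have hsF21 := sum_Fset (I := I) M2 M1
  have hsF12 := sum_Fset (I := I) M1 M2
  have hFE1 := F_card_le_E_card h1 h2
  have hFE2 := F_card_le_E_card h2 h1
  have hsum12 : ∑ k : L, (Eset I M1 M2 k).card = ∑ k : L, (Fset I M2 M1 k).card :=
    le_antisymm (Finset.sum_le_sum fun k _ => key12 k)
      (by rw [hsE12, hsF21]; exact hFE1)
  have hsum21 : ∑ k : L, (Eset I M2 M1 k).card = ∑ k : L, (Fset I M1 M2 k).card :=
    le_antisymm (Finset.sum_le_sum fun k _ => key21 k)
      (by rw [hsE21, hsF12]; exact hFE2)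
  have hpt12 : ∀ k : L, (Eset I M1 M2 k).card = (Fset I M2 M1 k).card := fun k =>
    (Finset.sum_eq_sum_iff_of_le fun i _ => key12 i).mp hsum12 k (Finset.mem_univ k)
  have hpt21 : ∀ k : L, (Eset I M2 M1 k).card = (Fset I M1 M2 k).card := fun k =>
    (Finset.sum_eq_sum_iff_of_le fun i _ => key21 i).mp hsum21 k (Finset.mem_univ k)
  intro k
  have c1 := card_lecAsg (I := I) h1.1.2.1 k
  have c2 := card_lecAsg (I := I) h2.1.2.1 k
  have hs1 := split3 (I := I) M1 M2 k
  have hs2 := split3 (I := I) M2 M1 k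
  have hcc : (Cset I M1 M2 k).card = (Cset I M2 M1 k).card := by
    congr 1
    ext z
    simp only [Cset, Finset.mem_filter]
    tauto
  have h12 := hpt12 k
  have h21 := hpt21 k
  omega
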